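/- arXiv:2504.06522 — 2 statements merged into one kernel-verified Lean document; each statement's English description precedes it below -/
import Mathlib

section
/- Let G be a graph with at least 3 vertices and let v and w be two distinct outer vertices of G. Then deleting them in either order gives the same graph, (G/v)/w = (G/w)/v, and the square of outer coface maps commutes: δ^v ∘ δ^w = δ^w ∘ δ^v as graphical maps (G/v)/w → G. -/
/-!  A formalization of the graphical category of finite (connected) multigraphs
with legs, loops and parallel edges, following the half-edge encoding:
a graph is given by a finite set of vertices, a finite set of half-edges,
an involution pairing the two halves of an edge (legs and free edges have a
fixed or unattached half), and an attachment map.  Graphical maps are encoded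
by their action on (half-)edges together with the assignment of an embedded
subgraph (given by its vertex set and its ι-closed set of half-edges) to each
vertex; `PreGMap.EqOn G f g` is equality of graphical maps out of `G`. -/

structure HGraph where
  V : Finset ℕ
  H : Finset ℕ
  ι : ℕ → ℕ
  att : ℕ → Option ℕ

namespace HGraph

/-- Two vertices are adjacent when some edge joins them. -/
def Adj (G : HGraph) (v w : ℕ) : Prop :=
  ∃ h ∈ G.H, G.att h = some v ∧ G.att (G.ι h) = some w

/-- Connectedness of a graph. -/
def Connected (G : HGraph) : Prop :=
  ∀ v ∈ G.V, ∀ w ∈ G.V, Relation.ReflTransGen G.Adj v w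

/-- Well-formedness: the involution and the attachment are internal to the
graph, and the graph is connected (graphs are finite connected multigraphs). -/
def Wf (G : HGraph) : Prop :=
  (∀ h ∈ G.H, G.ι h ∈ G.H) ∧
  (∀ h ∈ G.H, G.ι (G.ι h) = h) ∧
  (∀ h ∈ G.H, ∀ v, G.att h = some v → v ∈ G.V) ∧
  G.Connected

/-- `h` is (a half of) an inner edge: both ends are attached to vertices. -/
def IsInnerEdge (G : HGraph) (h : ℕ) : Prop :=
  h ∈ G.H ∧ h ≠ G.ι h ∧ (G.att h).isSome ∧ (G.att (G.ι h)).isSome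

/-- `h` is (a half of) a loop: an edge from a vertex to itself. -/
def IsLoop (G : HGraph) (h : ℕ) : Prop :=
  h ∈ G.H ∧ h ≠ G.ι h ∧ ∃ v, G.att h = some v ∧ G.att (G.ι h) = some v

/-- The number of non-leg edges incident to `v` (a loop counts once). -/
def nonLegEdgeCount (G : HGraph) (v : ℕ) : ℕ :=
  (G.H.filter fun h => G.att h = some v ∧ (G.att (G.ι h)).isSome ∧ G.att (G.ι h) ≠ some v).card +
  (G.H.filter fun h => G.att h = some v ∧ G.att (G.ι h) = some v ∧ h ≠ G.ι h).card / 2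

/-- An outer vertex: at most one incident non-leg edge. -/
def IsOuterVertex (G : HGraph) (v : ℕ) : Prop :=
  v ∈ G.V ∧ G.nonLegEdgeCount v ≤ 1

/-- The corolla at `v`, as an embedded subgraph (vertex set and half-edges). -/
def corolla (G : HGraph) (v : ℕ) : Finset ℕ × Finset ℕ :=
  ({v}, G.H.filter fun h => G.att h = some v ∨ G.att (G.ι h) = some v)

/-- `G/b`: contract the (non-loop) inner edge `b`, merging its two endpoints
into the single vertex `min x y`. -/
def contract (G : HGraph) (b : ℕ) : HGraph :=
  let x := (G.att b).getD 0
  let y := (G.att (G.ι b)).getD 0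
  let z := min x y
  let H' := G.H.filter fun h => h ≠ b ∧ h ≠ G.ι b
  { V := insert z ((G.V.erase x).erase y)
    H := H'
    ι := fun h => if h ∈ H' then G.ι h else h
    att := fun h => if h ∈ H' then
        (if G.att h = some x ∨ G.att h = some y then some z else G.att h) else none }

/-- `G/v`: delete the (outer) vertex `v` together with its legs and loops;
edges joining `v` to other vertices become legs. -/
def delVertex (G : HGraph) (v : ℕ) : HGraph :=
  let H' := G.H.filter fun h =>
    ¬ ((G.att h = some v ∨ G.att (G.ι h) = some v) ∧
       (G.att h = some v ∨ G.att h = none) ∧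
       (G.att (G.ι h) = some v ∨ G.att (G.ι h) = none))
  { V := G.V.erase v
    H := H'
    ι := fun h => if h ∈ H' then G.ι h else h
    att := fun h => if h ∈ H' then (if G.att h = some v then none else G.att h) else none }

/-- `G/ℓ`: snip the loop (or cut the edge) `l` into two legs, with fresh
half-edges `a` and `b` as the new free ends. -/
def snip (G : HGraph) (l a b : ℕ) : HGraph :=
  let H' := insert a (insert b G.H)
  { V := G.V
    H := H'
    ι := fun h => if h ∈ H' then
        (if h = l then a else if h = a then l else
         if h = G.ι l then b else if h = b then G.ι l else G.ι h) else h
    att := fun h => if h ∈ H' then (if h = a ∨ h = b then none else G.att h) else none }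

/-- `G_b`: subdivide the edge `b` by one new bivalent vertex `u`,
splitting `b` into the two edges `{b, n₁}` and `{n₂, ι b}`. -/
def subdiv (G : HGraph) (b u n₁ n₂ : ℕ) : HGraph :=
  let H' := insert n₁ (insert n₂ G.H)
  { V := insert u G.V
    H := H'
    ι := fun h => if h ∈ H' then
        (if h = b then n₁ else if h = n₁ then b else
         if h = n₂ then (if G.ι b = b then n₂ else G.ι b) else
         if h = G.ι b then n₂ else G.ι h) else h
    att := fun h => if h ∈ H' then (if h = n₁ ∨ h = n₂ then some u else G.att h) else none }

/-- Validity of the data of a subdivision: `b` is an edge and the new names are fresh. -/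
def IsDegen (G : HGraph) (b u n₁ n₂ : ℕ) : Prop :=
  b ∈ G.H ∧ u ∉ G.V ∧ n₁ ∉ G.H ∧ n₂ ∉ G.H ∧ n₁ ≠ n₂

end HGraph

/-- The data of a graphical map: a map on half-edges (inducing the map `f₀` on
edges) and, for each vertex, an embedded subgraph of the target
(its vertex set together with its set of half-edges). -/
structure PreGMap where
  e : ℕ → ℕ
  vimg : ℕ → Finset ℕ × Finset ℕ

/-- Composition of graphical maps: compose on edges; the embedded subgraph at a
vertex is assembled by substituting the images of the vertices of its image. -/
def PreGMap.comp (g f : PreGMap) : PreGMap where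
  e := g.e ∘ f.e
  vimg := fun v =>
    ((f.vimg v).1.biUnion fun w => (g.vimg w).1,
     (f.vimg v).2.image g.e ∪ (f.vimg v).1.biUnion fun w => (g.vimg w).2)

/-- Equality of graphical maps out of `G` (extensional equality of `f₀` and `f₁`). -/
def PreGMap.EqOn (G : HGraph) (f g : PreGMap) : Prop :=
  (∀ h ∈ G.H, f.e h = g.e h) ∧ ∀ v ∈ G.V, f.vimg v = g.vimg v

namespace HGraph

/-- The identity graphical map of `G`. -/
def idMap (G : HGraph) : PreGMap := ⟨id, G.corolla⟩

/-- The inner coface map `δ^b : G/b → G`: identity on edges, sending the merged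
vertex to the embedded barbell subgraph of `G` around `b`, and every other
vertex to its corolla. -/
def innerCoface (G : HGraph) (b : ℕ) : PreGMap :=
  let x := (G.att b).getD 0
  let y := (G.att (G.ι b)).getD 0
  { e := id
    vimg := fun v => if v = min x y then
        ({x, y}, G.H.filter fun h =>
          G.att h = some x ∨ G.att h = some y ∨
          G.att (G.ι h) = some x ∨ G.att (G.ι h) = some y)
      else G.corolla v }

/-- The outer coface map `δ^v : G/v → G`: identity on edges, every vertex to its corolla. -/
def outerCoface (G : HGraph) (_v : ℕ) : PreGMap := ⟨id, G.corolla⟩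

/-- The cosnip map `δ^ℓ : G/ℓ → G`: both new legs are sent to the loop `l`,
identity on vertices. -/
def cosnip (G : HGraph) (l a b : ℕ) : PreGMap :=
  { e := fun h => if h = a then G.ι l else if h = b then l else h
    vimg := G.corolla }

/-- The codegeneracy map `σ^b : G_b → G`: the two halves of the subdivided edge
are sent to `b`, the new bivalent vertex to the edge graph `η_b`, and every
other vertex to its corolla. -/
def codegeneracy (G : HGraph) (b u n₁ n₂ : ℕ) : PreGMap :=
  { e := fun h => if h = n₁ then G.ι b else if h = n₂ then b else h
    vimg := fun v => if v = u then ((∅ : Finset ℕ), ({b, G.ι b} : Finset ℕ))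
      else G.corolla v }

/-- The conditions for `f` to be a graphical map `G → G'`: it maps edges to
edges, each vertex to an embedded subgraph of `G'`, the vertex sets of the
images are disjoint and together exhaust the vertices of `G'`, and boundaries
match: each half-edge at `v` is sent into the subgraph at `v`. -/
def IsGMap (G G' : HGraph) (f : PreGMap) : Prop :=
  (∀ h ∈ G.H, f.e h ∈ G'.H ∧ (f.e (G.ι h) = f.e h ∨ f.e (G.ι h) = G'.ι (f.e h))) ∧
  (∀ v ∈ G.V, (f.vimg v).1 ⊆ G'.V ∧ (f.vimg v).2 ⊆ G'.H) ∧
  (∀ v ∈ G.V, ∀ w ∈ G.V, v ≠ w → Disjoint (f.vimg v).1 (f.vimg w).1) ∧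
  G.V.biUnion (fun v => (f.vimg v).1) = G'.V ∧
  (∀ v ∈ G.V, ∀ h ∈ G.H, G.att h = some v → f.e h ∈ (f.vimg v).2)

end HGraph

/-- The three kinds of coface maps: inner cofaces, outer cofaces, and cosnips. -/
inductive CofaceKind where
  | inner (e : ℕ)
  | outer (v : ℕ)
  | snip (l a b : ℕ)

namespace HGraph

/-- The source of the coface map of kind `k` into `G`. -/
def cofaceSource (G : HGraph) : CofaceKind → HGraph
  | .inner e => G.contract e
  | .outer v => G.delVertex v
  | .snip l a b => G.snip l a b

/-- The coface map of kind `k` into `G`. -/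
def cofaceMap (G : HGraph) : CofaceKind → PreGMap
  | .inner e => G.innerCoface e
  | .outer v => G.outerCoface v
  | .snip l a b => G.cosnip l a b

/-- Validity of a coface map into `G`: inner cofaces contract non-loop inner
edges, outer cofaces delete outer vertices, cosnips snip loops (with fresh
names, leaving the graph connected). -/
def IsCoface (G : HGraph) : CofaceKind → Prop
  | .inner e => G.IsInnerEdge e ∧ ¬ G.IsLoop e
  | .outer v => G.IsOuterVertex v
  | .snip l a b => G.IsLoop l ∧ a ∉ G.H ∧ b ∉ G.H ∧ a ≠ b ∧ (G.snip l a b).Connected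

end HGraph

/-- `CofaceSeq G₁ G₂ f`: `f : G₁ → G₂` is a composite of a sequence of coface maps. -/
inductive CofaceSeq : HGraph → HGraph → PreGMap → Prop where
  | nil (G : HGraph) : CofaceSeq G G G.idMap
  | cons {G₁ G₂ : HGraph} {f : PreGMap} (k : CofaceKind) (hk : G₂.IsCoface k)
      (h : CofaceSeq G₁ (G₂.cofaceSource k) f) :
      CofaceSeq G₁ G₂ ((G₂.cofaceMap k).comp f)

/-- `DegenSeq G₁ G₂ f`: `f : G₁ → G₂` is a composite of a sequence of codegeneracy maps. -/
inductive DegenSeq : HGraph → HGraph → PreGMap → Prop where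
  | nil (G : HGraph) : DegenSeq G G G.idMap
  | cons {G₁ G₂ : HGraph} {f : PreGMap} (b u n₁ n₂ : ℕ) (hb : G₂.IsDegen b u n₁ n₂)
      (h : DegenSeq G₁ (G₂.subdiv b u n₁ n₂) f) :
      DegenSeq G₁ G₂ ((G₂.codegeneracy b u n₁ n₂).comp f)

/-- `ElemSeq G₁ G₂ f`: `f : G₁ → G₂` is an arbitrary composite of coface and
codegeneracy maps. -/
inductive ElemSeq : HGraph → HGraph → PreGMap → Prop where
  | nil (G : HGraph) : ElemSeq G G G.idMap
  | coface {G₁ G₂ : HGraph} {f : PreGMap} (k : CofaceKind) (hk : G₂.IsCoface k)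
      (h : ElemSeq G₁ (G₂.cofaceSource k) f) :
      ElemSeq G₁ G₂ ((G₂.cofaceMap k).comp f)
  | degen {G₁ G₂ : HGraph} {f : PreGMap} (b u n₁ n₂ : ℕ) (hb : G₂.IsDegen b u n₁ n₂)
      (h : ElemSeq G₁ (G₂.subdiv b u n₁ n₂) f) :
      ElemSeq G₁ G₂ ((G₂.codegeneracy b u n₁ n₂).comp f)

namespace OuterComm

def mask (x : Option ℕ) (v : ℕ) : Option ℕ := if x = some v then none else x

def D (x y : Option ℕ) (v : ℕ) : Prop :=
  (x = some v ∨ y = some v) ∧ (x = some v ∨ x = none) ∧ (y = some v ∨ y = none)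

instance (x y : Option ℕ) (v : ℕ) : Decidable (D x y v) := by unfold D; infer_instance

lemma mask_mask (x : Option ℕ) (v w : ℕ) : mask (mask x v) w = mask (mask x w) v := by
  unfold mask; split_ifs <;> simp_all

lemma mask_eq_some {x : Option ℕ} {v u : ℕ} (h : mask x v = some u) : x = some u := by
  unfold mask at h; split_ifs at h <;> simp_all

lemma psi_symm (x y : Option ℕ) (v w : ℕ) (hvw : v ≠ w) :
    (¬ D x y v ∧ ¬ D (mask x v) (if D y x v then none else mask y v) w) ↔
    (¬ D x y w ∧ ¬ D (mask x w) (if D y x w then none else mask y w) v) := by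
  unfold D mask
  rcases x with _ | a <;> rcases y with _ | b <;> simp_all [Option.some_inj] <;> tauto

lemma graph_ext {G₁ G₂ : HGraph} (hV : G₁.V = G₂.V) (hH : G₁.H = G₂.H)
    (hι : G₁.ι = G₂.ι) (hatt : G₁.att = G₂.att) : G₁ = G₂ := by
  cases G₁; cases G₂; simp_all

lemma mem_delVertex_H {G : HGraph} {v h : ℕ} :
    h ∈ (G.delVertex v).H ↔ h ∈ G.H ∧ ¬ D (G.att h) (G.att (G.ι h)) v := by
  simp [HGraph.delVertex, D, Finset.mem_filter]

lemma delVertex_ι_eq' (G : HGraph) (v h : ℕ) :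
    (G.delVertex v).ι h = if h ∈ (G.delVertex v).H then G.ι h else h := rfl

lemma delVertex_att_eq (G : HGraph) (v h : ℕ) :
    (G.delVertex v).att h =
      if h ∈ (G.delVertex v).H then mask (G.att h) v else none := rfl

lemma delVertex_ι_eq {G : HGraph} {v h : ℕ} (hm : h ∈ (G.delVertex v).H) :
    (G.delVertex v).ι h = G.ι h := by rw [delVertex_ι_eq', if_pos hm]

lemma delVertex_att_some {G : HGraph} {v h u : ℕ}
    (hc : (G.delVertex v).att h = some u) : G.att h = some u := by
  rw [delVertex_att_eq] at hc
  split_ifs at hc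
  exact mask_eq_some hc

lemma mem_deldel {G : HGraph} (hι1 : ∀ h ∈ G.H, G.ι h ∈ G.H)
    (hι2 : ∀ h ∈ G.H, G.ι (G.ι h) = h) (v w h : ℕ) :
    h ∈ ((G.delVertex v).delVertex w).H ↔
      h ∈ G.H ∧ ¬ D (G.att h) (G.att (G.ι h)) v ∧
        ¬ D (mask (G.att h) v)
          (if D (G.att (G.ι h)) (G.att h) v then none
           else mask (G.att (G.ι h)) v) w := by
  rw [mem_delVertex_H, mem_delVertex_H]
  by_cases hm : h ∈ (G.delVertex v).H
  · have hmG := mem_delVertex_H.mp hm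
    have hG : h ∈ G.H := hmG.1
    have hιG : G.ι h ∈ G.H := hι1 h hG
    have hflip : G.ι (G.ι h) = h := hι2 h hG
    have h1 : (G.delVertex v).att h = mask (G.att h) v := by
      rw [delVertex_att_eq, if_pos hm]
    have h2 : (G.delVertex v).att ((G.delVertex v).ι h) =
        if D (G.att (G.ι h)) (G.att h) v then none else mask (G.att (G.ι h)) v := by
      rw [delVertex_ι_eq hm, delVertex_att_eq]
      by_cases hd : D (G.att (G.ι h)) (G.att h) v
      · rw [if_pos hd, if_neg]
        rw [mem_delVertex_H, hflip]
        tauto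
      · rw [if_neg hd, if_pos]
        rw [mem_delVertex_H, hflip]
        exact ⟨hιG, hd⟩
    rw [h1, h2]
    tauto
  · rw [mem_delVertex_H] at hm
    tauto

lemma mem_deldel_left {G : HGraph} {v w h : ℕ}
    (hm : h ∈ ((G.delVertex v).delVertex w).H) : h ∈ (G.delVertex v).H :=
  (mem_delVertex_H.mp hm).1

lemma deldel_att (G : HGraph) (v w h : ℕ) :
    ((G.delVertex v).delVertex w).att h =
      if h ∈ ((G.delVertex v).delVertex w).H then mask (mask (G.att h) v) w
      else none := by
  rw [delVertex_att_eq]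
  by_cases hm : h ∈ ((G.delVertex v).delVertex w).H
  · rw [if_pos hm, if_pos hm, delVertex_att_eq, if_pos (mem_deldel_left hm)]
  · rw [if_neg hm, if_neg hm]

lemma deldel_ι (G : HGraph) (v w h : ℕ) :
    ((G.delVertex v).delVertex w).ι h =
      if h ∈ ((G.delVertex v).delVertex w).H then G.ι h else h := by
  rw [delVertex_ι_eq']
  by_cases hm : h ∈ ((G.delVertex v).delVertex w).H
  · rw [if_pos hm, if_pos hm, delVertex_ι_eq (mem_deldel_left hm)]
  · rw [if_neg hm, if_neg hm]

lemma filter_corolla_sub (G : HGraph) (v u : ℕ) :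
    ((G.delVertex v).corolla u).2 ⊆ (G.corolla u).2 := by
  intro h hh
  simp only [HGraph.corolla, Finset.mem_filter] at hh ⊢
  obtain ⟨hmem, hcase⟩ := hh
  have hG : h ∈ G.H := (mem_delVertex_H.mp hmem).1
  refine ⟨hG, ?_⟩
  rcases hcase with hc | hc
  · exact Or.inl (delVertex_att_some hc)
  · rw [delVertex_ι_eq hmem] at hc
    exact Or.inr (delVertex_att_some hc)

end OuterComm

/-- For a graph `G` with at least `3` vertices and two
distinct outer vertices `v` and `w`, deleting them in either order gives the
same graph, `(G/v)/w = (G/w)/v`, and the square of outer coface maps commutes: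
`δ^v ∘ δ^w = δ^w ∘ δ^v` as graphical maps `(G/v)/w → G`. -/
theorem outer_cofaces_commute (G : HGraph) (hG : G.Wf) (hcard : 3 ≤ G.V.card)
    (v w : ℕ) (hv : G.IsOuterVertex v) (hw : G.IsOuterVertex w) (hvw : v ≠ w) :
    (G.delVertex v).delVertex w = (G.delVertex w).delVertex v ∧
    PreGMap.EqOn ((G.delVertex v).delVertex w)
      ((G.outerCoface v).comp ((G.delVertex v).outerCoface w))
      ((G.outerCoface w).comp ((G.delVertex w).outerCoface v)) := by
  open OuterComm in
  obtain ⟨hι1, hι2, -, -⟩ := hG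
  have hHeq : ((G.delVertex v).delVertex w).H = ((G.delVertex w).delVertex v).H := by
    ext h
    rw [mem_deldel hι1 hι2, mem_deldel hι1 hι2]
    exact and_congr_right fun _ => psi_symm _ _ _ _ hvw
  have hGeq : (G.delVertex v).delVertex w = (G.delVertex w).delVertex v := by
    refine graph_ext ?_ hHeq ?_ ?_
    · show ((G.V.erase v).erase w) = ((G.V.erase w).erase v)
      exact Finset.erase_right_comm
    · funext h
      rw [deldel_ι, deldel_ι, hHeq]
    · funext h
      rw [deldel_att, deldel_att, hHeq, mask_mask]
  refine ⟨hGeq, fun h _ => rfl, fun u hu => ?_⟩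
  simp only [PreGMap.comp, HGraph.outerCoface]
  have key : ∀ x : ℕ, (((G.delVertex x).corolla u).1.biUnion fun w' => (G.corolla w').1,
      ((G.delVertex x).corolla u).2.image id ∪
        ((G.delVertex x).corolla u).1.biUnion fun w' => (G.corolla w').2) =
      (({u} : Finset ℕ), (G.corolla u).2) := by
    intro x
    have h1 : ((G.delVertex x).corolla u).1 = {u} := rfl
    rw [h1, Finset.singleton_biUnion, Finset.singleton_biUnion, Finset.image_id]
    have h2 : (G.corolla u).1 = {u} := rfl
    rw [h2, Finset.union_eq_right.mpr (filter_corolla_sub G x u)]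
  rw [key v, key w]
end

section
/- Let G be a graph, v an outer vertex of G, and e an inner edge of G not adjacent to v. Then (G/v)/e = (G/e)/v, and the mixed square commutes: δ^v ∘ δ^e = δ^e ∘ δ^v as graphical maps (G/v)/e → G. -/
theorem HGraph.ext' {G₁ G₂ : HGraph} (hV : G₁.V = G₂.V) (hH : G₁.H = G₂.H)
    (hi : G₁.ι = G₂.ι) (ha : G₁.att = G₂.att) : G₁ = G₂ := by
  cases G₁; cases G₂; simp_all

set_option maxHeartbeats 1600000 in
/-- For an outer vertex `v` and a (non-loop) inner edge `e`
of `G` not adjacent to `v`, one has `(G/v)/e = (G/e)/v` and the mixed square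
commutes: `δ^v ∘ δ^e = δ^e ∘ δ^v` as graphical maps `(G/v)/e → G`. -/
theorem inner_outer_cofaces_commute (G : HGraph) (hG : G.Wf) (v e : ℕ)
    (hv : G.IsOuterVertex v) (he : G.IsInnerEdge e) (hl : ¬ G.IsLoop e)
    (hadj : G.att e ≠ some v ∧ G.att (G.ι e) ≠ some v) :
    (G.delVertex v).contract e = (G.contract e).delVertex v ∧
    PreGMap.EqOn ((G.delVertex v).contract e)
      ((G.outerCoface v).comp ((G.delVertex v).innerCoface e))
      ((G.innerCoface e).comp ((G.contract e).outerCoface v)) := by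
  obtain ⟨hι, hinv, hattV, hconn⟩ := hG
  obtain ⟨heH, hne, hs1, hs2⟩ := he
  obtain ⟨x, hx⟩ := Option.isSome_iff_exists.mp hs1
  obtain ⟨y, hy⟩ := Option.isSome_iff_exists.mp hs2
  have hieH : G.ι e ∈ G.H := hι e heH
  have hii : G.ι (G.ι e) = e := hinv e heH
  have hxv : x ≠ v := fun h => hadj.1 (h ▸ hx)
  have hyv : y ≠ v := fun h => hadj.2 (h ▸ hy)
  have hxy : x ≠ y := by
    intro h; exact hl ⟨heH, hne, y, h ▸ hx, hy⟩
  have hzv : min x y ≠ v := by rcases min_choice x y with h | h <;> rw [h] <;> assumption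
  -- membership facts in G/v
  have heH1 : e ∈ (G.delVertex v).H := by
    simp only [HGraph.delVertex, Finset.mem_filter, hx, hy]
    exact ⟨heH, by simp [hxv, hyv]⟩
  have hieH1 : G.ι e ∈ (G.delVertex v).H := by
    simp only [HGraph.delVertex, Finset.mem_filter, hy, hii, hx]
    exact ⟨hieH, by simp [hxv, hyv]⟩
  have hd_att_e : (G.delVertex v).att e = some x := by
    simp only [HGraph.delVertex] at heH1 ⊢
    simp [heH1, heH, hieH, hx, hy, hii, hxv, hyv]
  have hd_ι_e : (G.delVertex v).ι e = G.ι e := by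
    simp only [HGraph.delVertex] at heH1 ⊢
    simp [heH1, heH, hieH, hx, hy, hii, hxv, hyv]
  have hd_att_ιe : (G.delVertex v).att (G.ι e) = some y := by
    simp only [HGraph.delVertex] at hieH1 ⊢
    simp [hieH1, heH, hieH, hx, hy, hii, hxv, hyv]
  -- characterizations of H-sets
  have hdH : ∀ h, h ∈ (G.delVertex v).H ↔ h ∈ G.H ∧
      ¬((G.att h = some v ∨ G.att (G.ι h) = some v) ∧
        (G.att h = some v ∨ G.att h = none) ∧
        (G.att (G.ι h) = some v ∨ G.att (G.ι h) = none)) := by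
    intro h; simp [HGraph.delVertex, Finset.mem_filter]
  have hcH : ∀ h, h ∈ (G.contract e).H ↔ h ∈ G.H ∧ h ≠ e ∧ h ≠ G.ι e := by
    intro h; simp [HGraph.contract, Finset.mem_filter]
  -- evaluation lemmas
  have hdι : ∀ h ∈ (G.delVertex v).H, (G.delVertex v).ι h = G.ι h := by
    intro h hh
    have : h ∈ (G.delVertex v).H := hh
    simp only [HGraph.delVertex] at this ⊢
    rw [if_pos this]
  have hdatt : ∀ h ∈ (G.delVertex v).H,
      (G.delVertex v).att h = if G.att h = some v then none else G.att h := by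
    intro h hh
    have : h ∈ (G.delVertex v).H := hh
    simp only [HGraph.delVertex] at this ⊢
    rw [if_pos this]
  have hcι : ∀ h ∈ (G.contract e).H, (G.contract e).ι h = G.ι h := by
    intro h hh
    have : h ∈ (G.contract e).H := hh
    simp only [HGraph.contract] at this ⊢
    rw [if_pos this]
  have hcatt : ∀ h ∈ (G.contract e).H, (G.contract e).att h =
      if G.att h = some x ∨ G.att h = some y then some (min x y) else G.att h := by
    intro h hh
    have : h ∈ (G.contract e).H := hh
    simp only [HGraph.contract, hx, hy, Option.getD_some] at this ⊢
    rw [if_pos this]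
  -- closure under ι
  have hdιmem : ∀ h ∈ (G.delVertex v).H, G.ι h ∈ (G.delVertex v).H := by
    intro h hh
    rw [hdH] at hh ⊢
    obtain ⟨h1, h2⟩ := hh
    refine ⟨hι h h1, ?_⟩
    rw [hinv h h1]
    tauto
  have hcιmem : ∀ h ∈ (G.contract e).H, G.ι h ∈ (G.contract e).H := by
    intro h hh
    rw [hcH] at hh ⊢
    obtain ⟨h1, h2, h3⟩ := hh
    refine ⟨hι h h1, fun hc => h3 ?_, fun hc => h2 ?_⟩
    · rw [← hinv h h1, hc]
    · rw [← hinv h h1, hc, hii]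
  -- contract does not change attachment to v, nor none-ness
  have hcattv : ∀ h ∈ (G.contract e).H,
      ((G.contract e).att h = some v ↔ G.att h = some v) ∧
      ((G.contract e).att h = none ↔ G.att h = none) := by
    intro h hh
    rw [hcatt h hh]
    split_ifs with h1
    · rcases h1 with h1 | h1 <;> simp [h1, hzv, hxv, hyv]
    · exact ⟨Iff.rfl, Iff.rfl⟩
  -- membership characterizations of the two composite graphs
  have hLH : ∀ h, h ∈ ((G.delVertex v).contract e).H ↔
      (h ∈ G.H ∧ h ≠ e ∧ h ≠ G.ι e) ∧
      ¬((G.att h = some v ∨ G.att (G.ι h) = some v) ∧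
        (G.att h = some v ∨ G.att h = none) ∧
        (G.att (G.ι h) = some v ∨ G.att (G.ι h) = none)) := by
    intro h
    have : h ∈ ((G.delVertex v).contract e).H ↔
        h ∈ (G.delVertex v).H ∧ h ≠ e ∧ h ≠ (G.delVertex v).ι e := by
      simp [HGraph.contract, Finset.mem_filter]
    rw [this, hd_ι_e, hdH]
    tauto
  have hRH : ∀ h, h ∈ ((G.contract e).delVertex v).H ↔
      (h ∈ G.H ∧ h ≠ e ∧ h ≠ G.ι e) ∧
      ¬((G.att h = some v ∨ G.att (G.ι h) = some v) ∧
        (G.att h = some v ∨ G.att h = none) ∧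
        (G.att (G.ι h) = some v ∨ G.att (G.ι h) = none)) := by
    intro h
    have hmem : h ∈ ((G.contract e).delVertex v).H ↔
        h ∈ (G.contract e).H ∧
        ¬(((G.contract e).att h = some v ∨ (G.contract e).att ((G.contract e).ι h) = some v) ∧
          ((G.contract e).att h = some v ∨ (G.contract e).att h = none) ∧
          ((G.contract e).att ((G.contract e).ι h) = some v ∨
            (G.contract e).att ((G.contract e).ι h) = none)) := by
      simp [HGraph.delVertex, Finset.mem_filter]
    rw [hmem]
    by_cases hm : h ∈ (G.contract e).H
    · have hi := hcιmem h hm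
      rw [hcι h hm, (hcattv h hm).1, (hcattv h hm).2, (hcattv _ hi).1, (hcattv _ hi).2,
        hcH]
    · simp [hm]
      rw [hcH] at hm
      tauto
  have hHeq : ((G.delVertex v).contract e).H = ((G.contract e).delVertex v).H := by
    ext h; rw [hLH, hRH]
  have hvx : v ≠ x := Ne.symm hxv
  have hvy : v ≠ y := Ne.symm hyv
  have hdV : (G.delVertex v).V = G.V.erase v := rfl
  have hcV : (G.contract e).V = insert (min x y) ((G.V.erase x).erase y) := by
    simp [HGraph.contract, hx, hy]
  have hVeq : ((G.delVertex v).contract e).V = ((G.contract e).delVertex v).V := by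
    have hL : ((G.delVertex v).contract e).V
        = insert (min x y) (((G.V.erase v).erase x).erase y) := by
      simp only [HGraph.contract, hd_ι_e, hd_att_e, hd_att_ιe, Option.getD_some, hdV]
    have hR : ((G.contract e).delVertex v).V
        = (insert (min x y) ((G.V.erase x).erase y)).erase v := by
      simp only [HGraph.delVertex, hcV]
    rw [hL, hR]
    ext w
    simp only [Finset.mem_insert, Finset.mem_erase]
    by_cases hw : w = min x y
    · subst hw; simp [hzv]
    · simp [hw]; tauto
  have hLι : ∀ h, ((G.delVertex v).contract e).ι h =
      if h ∈ ((G.delVertex v).contract e).H then G.ι h else h := by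
    intro h
    by_cases hh : h ∈ ((G.delVertex v).contract e).H
    · rw [if_pos hh]
      have hh' : h ∈ ((G.delVertex v).contract e).H := hh
      simp only [HGraph.contract] at hh' ⊢
      rw [if_pos hh']
      exact hdι h (Finset.mem_filter.mp hh').1
    · rw [if_neg hh]
      have hh' := hh
      simp only [HGraph.contract] at hh' ⊢
      rw [if_neg hh']
  have hRι : ∀ h, ((G.contract e).delVertex v).ι h =
      if h ∈ ((G.contract e).delVertex v).H then G.ι h else h := by
    intro h
    by_cases hh : h ∈ ((G.contract e).delVertex v).H
    · rw [if_pos hh]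
      have hh' : h ∈ ((G.contract e).delVertex v).H := hh
      simp only [HGraph.delVertex] at hh' ⊢
      rw [if_pos hh']
      exact hcι h (Finset.mem_filter.mp hh').1
    · rw [if_neg hh]
      have hh' := hh
      simp only [HGraph.delVertex] at hh' ⊢
      rw [if_neg hh']
  have hLatt : ∀ h, ((G.delVertex v).contract e).att h =
      if h ∈ ((G.delVertex v).contract e).H then
        (if G.att h = some x ∨ G.att h = some y then some (min x y)
         else if G.att h = some v then none else G.att h) else none := by
    intro h
    by_cases hh : h ∈ ((G.delVertex v).contract e).H
    · rw [if_pos hh]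
      have hmem : h ∈ (G.delVertex v).H := by
        have h2 := hh; rw [hLH] at h2; exact (hdH h).mpr ⟨h2.1.1, h2.2⟩
      have hh' : h ∈ ((G.delVertex v).contract e).H := hh
      simp only [HGraph.contract, hd_ι_e, hd_att_e, hd_att_ιe, Option.getD_some] at hh' ⊢
      rw [if_pos hh', hdatt h hmem]
      by_cases hv' : G.att h = some v
      · simp [hv', hvx, hvy]
      · simp [hv']
    · rw [if_neg hh]
      have hh' := hh
      simp only [HGraph.contract, hd_ι_e, hd_att_e, hd_att_ιe, Option.getD_some] at hh' ⊢
      rw [if_neg hh']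
  have hRatt : ∀ h, ((G.contract e).delVertex v).att h =
      if h ∈ ((G.contract e).delVertex v).H then
        (if G.att h = some x ∨ G.att h = some y then some (min x y)
         else if G.att h = some v then none else G.att h) else none := by
    intro h
    by_cases hh : h ∈ ((G.contract e).delVertex v).H
    · rw [if_pos hh]
      have hmem : h ∈ (G.contract e).H := by
        have h2 := hh; rw [hRH] at h2; exact (hcH h).mpr h2.1
      have hh' : h ∈ ((G.contract e).delVertex v).H := hh
      simp only [HGraph.delVertex] at hh' ⊢
      rw [if_pos hh', hcatt h hmem]
      by_cases hp : G.att h = some x ∨ G.att h = some y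
      · simp [hp, hzv]
      · simp [hp]
    · rw [if_neg hh]
      have hh' := hh
      simp only [HGraph.delVertex] at hh' ⊢
      rw [if_neg hh']
  have hιeq : ((G.delVertex v).contract e).ι = ((G.contract e).delVertex v).ι := by
    funext h; rw [hLι h, hRι h, hHeq]
  have hatteq : ((G.delVertex v).contract e).att = ((G.contract e).delVertex v).att := by
    funext h; rw [hLatt h, hRatt h, hHeq]
  have hLV : ((G.delVertex v).contract e).V
      = insert (min x y) (((G.V.erase v).erase x).erase y) := by
    simp only [HGraph.contract, hd_ι_e, hd_att_e, hd_att_ιe, Option.getD_some, hdV]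
  refine ⟨HGraph.ext' hVeq hHeq hιeq hatteq, ?_, ?_⟩
  · intro h _
    rfl
  intro w hw
  rw [hLV] at hw
  simp only [PreGMap.comp, HGraph.outerCoface, HGraph.innerCoface, HGraph.corolla,
    hd_att_e, hd_ι_e, hd_att_ιe, hx, hy, Option.getD_some]
  rcases Finset.mem_insert.mp hw with hw1 | hw2
  · rw [hw1]
    simp only [if_pos rfl]
    simp only [if_true, Finset.singleton_biUnion, Finset.biUnion_insert, Finset.image_id]
    have hbar : Finset.filter (fun h => G.att h = some x ∨ G.att (G.ι h) = some x) G.H ∪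
        Finset.filter (fun h => G.att h = some y ∨ G.att (G.ι h) = some y) G.H =
        Finset.filter (fun h => G.att h = some x ∨ G.att h = some y ∨
          G.att (G.ι h) = some x ∨ G.att (G.ι h) = some y) G.H := by
      ext h
      simp only [Finset.mem_union, Finset.mem_filter]
      tauto
    have subA : Finset.filter (fun h =>
          (G.delVertex v).att h = some x ∨ (G.delVertex v).att h = some y ∨
          (G.delVertex v).att ((G.delVertex v).ι h) = some x ∨
          (G.delVertex v).att ((G.delVertex v).ι h) = some y) (G.delVertex v).H ⊆
        Finset.filter (fun h => G.att h = some x ∨ G.att h = some y ∨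
          G.att (G.ι h) = some x ∨ G.att (G.ι h) = some y) G.H := by
      intro h hh
      rw [Finset.mem_filter] at hh ⊢
      obtain ⟨hm, hc⟩ := hh
      refine ⟨((hdH h).mp hm).1, ?_⟩
      rw [hdι h hm, hdatt h hm, hdatt _ (hdιmem h hm)] at hc
      rcases hc with hc | hc | hc | hc <;> split_ifs at hc <;>
        first
          | exact Option.noConfusion hc
          | tauto
    have subC : Finset.filter (fun h => (G.contract e).att h = some (x ⊓ y) ∨
          (G.contract e).att ((G.contract e).ι h) = some (x ⊓ y)) (G.contract e).H ⊆
        Finset.filter (fun h => G.att h = some x ∨ G.att h = some y ∨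
          G.att (G.ι h) = some x ∨ G.att (G.ι h) = some y) G.H := by
      intro h hh
      rw [Finset.mem_filter] at hh ⊢
      obtain ⟨hm, hc⟩ := hh
      refine ⟨((hcH h).mp hm).1, ?_⟩
      rw [hcι h hm, hcatt h hm, hcatt _ (hcιmem h hm)] at hc
      rcases hc with hc | hc <;> split_ifs at hc <;>
        first
          | tauto
          | (rcases min_choice x y with hmc | hmc <;> rw [hmc] at hc <;> tauto)
    rw [Prod.mk.injEq]
    refine ⟨by ext u; simp, ?_⟩
    rw [hbar, Finset.union_eq_right.mpr subA, Finset.union_eq_right.mpr subC]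
  · have hwv : w ≠ v := (Finset.mem_erase.mp (Finset.mem_erase.mp (Finset.mem_erase.mp hw2).2).2).1
    have hwx : w ≠ x := (Finset.mem_erase.mp (Finset.mem_erase.mp hw2).2).1
    have hwy : w ≠ y := (Finset.mem_erase.mp hw2).1
    have hwz : w ≠ min x y := by
      rcases min_choice x y with h | h <;> rw [h] <;> assumption
    have hwV : w ∈ G.V := (Finset.mem_erase.mp (Finset.mem_erase.mp (Finset.mem_erase.mp hw2).2).2).2
    simp only [Finset.singleton_biUnion, Finset.image_id]
    simp only [if_neg hwz]
    simp only [Finset.singleton_biUnion, Finset.image_id]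
    have sub1 : Finset.filter (fun h => (G.delVertex v).att h = some w ∨
          (G.delVertex v).att ((G.delVertex v).ι h) = some w) (G.delVertex v).H ⊆
        Finset.filter (fun h => G.att h = some w ∨ G.att (G.ι h) = some w) G.H := by
      intro h hh
      rw [Finset.mem_filter] at hh ⊢
      obtain ⟨hm, hc⟩ := hh
      refine ⟨((hdH h).mp hm).1, ?_⟩
      rw [hdι h hm, hdatt h hm, hdatt _ (hdιmem h hm)] at hc
      rcases hc with hc | hc <;> split_ifs at hc <;>
        first
          | exact Option.noConfusion hc
          | tauto
    have sub2 : Finset.filter (fun h => (G.contract e).att h = some w ∨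
          (G.contract e).att ((G.contract e).ι h) = some w) (G.contract e).H ⊆
        Finset.filter (fun h => G.att h = some w ∨ G.att (G.ι h) = some w) G.H := by
      intro h hh
      rw [Finset.mem_filter] at hh ⊢
      obtain ⟨hm, hc⟩ := hh
      refine ⟨((hcH h).mp hm).1, ?_⟩
      rw [hcι h hm, hcatt h hm, hcatt _ (hcιmem h hm)] at hc
      rcases hc with hc | hc <;> split_ifs at hc <;>
        first
          | exact absurd (Option.some.inj hc).symm hwz
          | tauto
    rw [Prod.mk.injEq]
    refine ⟨rfl, ?_⟩
    rw [Finset.union_eq_right.mpr sub1, Finset.union_eq_right.mpr sub2]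
end
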